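/- Fix μ_X, μ_Y ∈ ℝ, σ_X, σ_Y > 0, r ∈ ℝ and 0 < K < M. With ψ(κ) the larger root of Q₃(a; κ) = (1/2)Σ²a(a−1) + (μ_X − μ_Y − κ(σ_X + σ_Y))a + μ_Y + κσ_Y − r (defined for κ large enough that r > μ_X − κσ_X) and φ₋(κ) the smaller root of Q₁(a; κ) = (1/2)Σ²a(a−1) + (μ_X − μ_Y + κ(σ_X + σ_Y))a + μ_Y − κσ_Y − r (defined for κ large enough that r > μ_Y − κσ_Y), one has ψ(κ) → +∞ and φ₋(κ) → −∞ as κ → ∞. Consequently the compound option exercise boundaries converge to the Marshallian rule: ψ(κ)K/(ψ(κ) − 1) → K and φ₋(κ)M/(φ₋(κ) − 1) → M as κ → ∞. -/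
import Mathlib


open Real Filter

lemma aux_top (C : ℝ) : Tendsto (fun x : ℝ => x * C / (x - 1)) atTop (nhds C) := by
  have hinv : Tendsto (fun x : ℝ => (x - 1)⁻¹) atTop (nhds 0) :=
    (tendsto_atTop_add_const_right atTop (-1) tendsto_id).inv_tendsto_atTop
  have h1 : Tendsto (fun x : ℝ => C + C * (x - 1)⁻¹) atTop (nhds C) := by
    have := (tendsto_const_nhds : Tendsto (fun _ : ℝ => C) atTop (nhds C)).add
      (hinv.const_mul C)
    simpa using this
  apply h1.congr'
  filter_upwards [eventually_gt_atTop (1 : ℝ)] with x hx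
  have hne : x - 1 ≠ 0 := by linarith
  field_simp
  ring

lemma aux_bot (C : ℝ) : Tendsto (fun x : ℝ => x * C / (x - 1)) atBot (nhds C) := by
  have hb : Tendsto (fun x : ℝ => x - 1) atBot atBot :=
    tendsto_atBot_add_const_right atBot (-1) tendsto_id
  have hinv : Tendsto (fun x : ℝ => (x - 1)⁻¹) atBot (nhds 0) := by
    have ht : Tendsto (fun x : ℝ => 1 - x) atBot atTop := by
      have := (tendsto_neg_atBot_atTop : Tendsto (fun x : ℝ => -x) atBot atTop)
      exact tendsto_atTop_add_const_left atBot 1 this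
    have := (ht.inv_tendsto_atTop).neg
    simp only [Pi.inv_apply, Pi.neg_apply, neg_zero] at this
    apply this.congr
    intro x
    rw [← inv_neg]
    ring_nf
  have h1 : Tendsto (fun x : ℝ => C + C * (x - 1)⁻¹) atBot (nhds C) := by
    have := (tendsto_const_nhds : Tendsto (fun _ : ℝ => C) atBot (nhds C)).add
      (hinv.const_mul C)
    simpa using this
  apply h1.congr'
  filter_upwards [eventually_lt_atBot (1 : ℝ)] with x hx
  have hne : x - 1 ≠ 0 := by linarith
  field_simp
  ring

/-- With `ψ(κ)` the larger root of `Q₃(·; κ)` and `φ₋(κ)` the smaller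
root of `Q₁(·; κ)` (explicit formulas), `ψ(κ) → +∞` and `φ₋(κ) → −∞` as `κ → ∞`;
consequently the compound option boundaries converge to the Marshallian rule:
`ψ(κ)K/(ψ(κ) − 1) → K` and `φ₋(κ)M/(φ₋(κ) − 1) → M`. -/
theorem marshallian_limit (μX μY σX σY r K M : ℝ)
    (hσX : 0 < σX) (hσY : 0 < σY) (hK : 0 < K) (hKM : K < M) :
    let S2 : ℝ := σX ^ 2 + σY ^ 2
    let ψ : ℝ → ℝ := fun κ => 1 / 2 - (μX - μY - κ * (σX + σY)) / S2 +
      Real.sqrt ((1 / 2 - (μX - μY - κ * (σX + σY)) / S2) ^ 2 +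
        2 * (r - μY - κ * σY) / S2)
    let φ : ℝ → ℝ := fun κ => 1 / 2 - (μX - μY + κ * (σX + σY)) / S2 -
      Real.sqrt ((1 / 2 - (μX - μY + κ * (σX + σY)) / S2) ^ 2 +
        2 * (r - μY + κ * σY) / S2)
    Tendsto ψ atTop atTop ∧ Tendsto φ atTop atBot ∧
    Tendsto (fun κ => ψ κ * K / (ψ κ - 1)) atTop (nhds K) ∧
    Tendsto (fun κ => φ κ * M / (φ κ - 1)) atTop (nhds M) := by
  intro S2 ψ φ
  have hS2 : 0 < S2 := by positivity
  have hslope : 0 < (σX + σY) / S2 := by positivity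
  -- lower bound function for ψ
  have hb : Tendsto (fun κ : ℝ => 1 / 2 - (μX - μY - κ * (σX + σY)) / S2) atTop atTop := by
    have h1 : Tendsto (fun κ : ℝ => κ * ((σX + σY) / S2)) atTop atTop :=
      Tendsto.atTop_mul_const hslope tendsto_id
    have h2 : Tendsto (fun κ : ℝ => κ * ((σX + σY) / S2) + (1 / 2 - (μX - μY) / S2))
        atTop atTop := tendsto_atTop_add_const_right _ _ h1
    apply h2.congr
    intro κ
    field_simp
    ring
  have hψ : Tendsto ψ atTop atTop := by
    apply tendsto_atTop_mono _ hb
    intro κ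
    simp only [ψ]
    nlinarith [Real.sqrt_nonneg ((1 / 2 - (μX - μY - κ * (σX + σY)) / S2) ^ 2 +
        2 * (r - μY - κ * σY) / S2)]
  have hb' : Tendsto (fun κ : ℝ => 1 / 2 - (μX - μY + κ * (σX + σY)) / S2) atTop atBot := by
    have h1 : Tendsto (fun κ : ℝ => κ * (-((σX + σY) / S2))) atTop atBot := by
      have h0 : Tendsto (fun κ : ℝ => κ * ((σX + σY) / S2)) atTop atTop :=
        Tendsto.atTop_mul_const hslope tendsto_id
      have := (tendsto_neg_atTop_atBot : Tendsto (fun x : ℝ => -x) atTop atBot).comp h0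
      apply this.congr
      intro κ
      simp only [Function.comp, mul_neg, neg_mul]
    have h2 : Tendsto (fun κ : ℝ => κ * (-((σX + σY) / S2)) + (1 / 2 - (μX - μY) / S2))
        atTop atBot := tendsto_atBot_add_const_right _ _ h1
    apply h2.congr
    intro κ
    field_simp
    ring
  have hφ : Tendsto φ atTop atBot := by
    apply tendsto_atBot_mono _ hb'
    intro κ
    simp only [φ]
    nlinarith [Real.sqrt_nonneg ((1 / 2 - (μX - μY + κ * (σX + σY)) / S2) ^ 2 +
        2 * (r - μY + κ * σY) / S2)]
  exact ⟨hψ, hφ, (aux_top K).comp hψ, (aux_bot M).comp hφ⟩
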